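/- Let t ≥ 2 and n ≥ 1 be integers, let ω ∈ ℂ be a primitive t-th root of unity, and let λ be a partition of length at most tn. Suppose it is NOT the case that both n_0(λ,tn) = n and n_i(λ,tn) + n_{t−i}(λ,tn) = 2n for all 1 ≤ i ≤ ⌊t/2⌋ (equivalently, the t-core of λ is not an orthogonal t-core). Then for every choice of nonzero x_1,…,x_n ∈ ℂ, the tn × tn matrix M, whose rows are indexed by pairs (p,i) with 0 ≤ p ≤ t−1, 1 ≤ i ≤ n, whose columns are indexed by 1 ≤ j ≤ tn, and whose entries are M_{(p,i),j} = (ω^p x_i)^{β_j(λ)} + (ω^p x_i)^{−β_j(λ)}, has determinant 0. In particular the even orthogonal character oe_λ evaluated at the tn numbers ω^p x_i vanishes. -/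

import Mathlib

open BigOperators

/-- The beta set of a partition `lam` of length at most `m`:
`β_j(λ) = λ_j + m - j` (0-indexed: `β j = λ j + (m - 1 - j)`). -/
def betaSet (m : ℕ) (lam : Fin m → ℕ) (j : Fin m) : ℕ :=
  lam j + (m - 1 - (j : ℕ))

/-- `n_i(λ, m)`: the number of entries of the beta set congruent to `i` mod `t`. -/
def ncount (t m : ℕ) (lam : Fin m → ℕ) (i : ℕ) : ℕ :=
  (Finset.univ.filter fun j : Fin m => betaSet m lam j % t = i).card

/-- The even orthogonal character of `mu` evaluated at nonzero complex numbers `y`;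
the denominator carries the extra factor `1 + δ_{μ_N, 0}`. -/
noncomputable def oeChar (N : ℕ) (mu : Fin N → ℕ) (y : Fin N → ℂ) : ℂ :=
  Matrix.det (Matrix.of fun i j : Fin N =>
      y i ^ ((betaSet N mu j : ℤ)) + y i ^ (-(betaSet N mu j : ℤ))) /
    ((if h : 0 < N then (if mu ⟨N - 1, Nat.sub_lt h Nat.one_pos⟩ = 0 then 2 else 1) else 1) *
      Matrix.det (Matrix.of fun i j : Fin N =>
        y i ^ (((N - 1 - (j : ℕ) : ℕ) : ℤ)) + y i ^ (-((N - 1 - (j : ℕ) : ℕ) : ℤ))))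

section Aux
open Finset

lemma delta_sum {n : ℕ} (k0 : Fin n) (coef : ℂ) (f : Fin n → ℂ) :
    ∑ k' : Fin n, (coef * (if k' = k0 then 1 else 0)) * f k' = coef * f k0 := by
  rw [Finset.sum_eq_single k0]
  · simp
  · intro b _ hb; simp [hb]
  · intro h; exact absurd (Finset.mem_univ _) h

lemma det_zero_of_cols {m : ℕ} (M : Matrix (Fin m) (Fin m) ℂ)
    (S : Type) [Fintype S] (A : Fin m → S → ℂ) (G : Finset (Fin m))
    (hcard : Fintype.card S < G.card)
    (hmem : ∀ j ∈ G, ∃ b : S → ℂ, ∀ r, M r j = ∑ s, A r s * b s) :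
    M.det = 0 := by
  choose b hb using hmem
  have hnli : ¬ LinearIndependent ℂ (fun j : {j // j ∈ G} => b j.1 j.2) := by
    intro h
    have h2 := h.fintype_card_le_finrank
    rw [Module.finrank_fintype_fun_eq_card, Fintype.card_coe] at h2
    omega
  rw [Fintype.not_linearIndependent_iff] at hnli
  obtain ⟨g, hg0, j0, hj0⟩ := hnli
  rw [← Matrix.exists_mulVec_eq_zero_iff]
  refine ⟨fun j => if h : j ∈ G then g ⟨j, h⟩ else 0, ?_, ?_⟩
  · intro hv
    apply hj0
    have h3 := congrFun hv j0.1
    simpa [dif_pos j0.2] using h3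
  · have hg0' : ∀ s : S, (∑ j ∈ G.attach, g j * b j.1 j.2 s) = 0 := by
      intro s
      have h4 := congrFun hg0 s
      simpa [Finset.sum_apply, smul_eq_mul, Finset.univ_eq_attach] using h4
    funext r
    simp only [Matrix.mulVec, dotProduct, Pi.zero_apply]
    have step1 : ∑ j, M r j * (if h : j ∈ G then g ⟨j, h⟩ else 0)
        = ∑ j ∈ G, M r j * (if h : j ∈ G then g ⟨j, h⟩ else 0) := by
      refine (Finset.sum_subset (Finset.subset_univ G) ?_).symm
      intro j _ hj
      rw [dif_neg hj, mul_zero]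
    rw [step1, ← Finset.sum_attach G (fun j => M r j * (if h : j ∈ G then g ⟨j, h⟩ else 0))]
    calc ∑ j ∈ G.attach, M r j.1 * (if h : j.1 ∈ G then g ⟨j.1, h⟩ else 0)
        = ∑ j ∈ G.attach, ∑ s, A r s * b j.1 j.2 s * g j := by
          refine Finset.sum_congr rfl fun j _ => ?_
          rw [dif_pos j.2, hb j.1 j.2 r, Finset.sum_mul]
      _ = ∑ s, ∑ j ∈ G.attach, A r s * b j.1 j.2 s * g j := Finset.sum_comm
      _ = ∑ s, A r s * ∑ j ∈ G.attach, g j * b j.1 j.2 s := by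
          refine Finset.sum_congr rfl fun s _ => ?_
          rw [Finset.mul_sum]
          exact Finset.sum_congr rfl fun j _ => by ring
      _ = 0 := by simp [hg0']
lemma main_det {t n : ℕ} (ht : 2 ≤ t) {ω : ℂ} (hω : IsPrimitiveRoot ω t)
    (β : Fin (t * n) → ℕ) (x : Fin n → ℂ)
    (p : Fin (t * n) → ℕ) (k : Fin (t * n) → Fin n)
    (i : ℕ) (hile : i ≤ t / 2)
    (hcard : (if i = 0 ∨ 2 * i = t then n else 2 * n)
      < (Finset.univ.filter fun j : Fin (t * n) => β j % t = i ∨ β j % t = t - i).card) :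
    Matrix.det (Matrix.of fun r j : Fin (t * n) =>
      (ω ^ (p r) * x (k r)) ^ ((β j : ℤ)) + (ω ^ (p r) * x (k r)) ^ (-(β j : ℤ))) = 0 := by
  have ht0 : 0 < t := by omega
  have hω1 : ω ^ t = 1 := hω.pow_eq_one
  have hωne : ω ≠ 0 := by
    intro h; rw [h, zero_pow ht0.ne'] at hω1; exact zero_ne_one hω1
  have key : ∀ a b : ℤ, (t : ℤ) ∣ a - b → ω ^ a = ω ^ b := by
    rintro a b ⟨d, hd⟩
    have hab : a = b + t * d := by linarith
    rw [hab, zpow_add₀ hωne, zpow_mul, zpow_natCast, hω1, one_zpow, mul_one]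
  have hdvd : ∀ j : Fin (t * n), (t : ℤ) ∣ ((β j : ℤ) - ((β j % t : ℕ) : ℤ)) := by
    intro j
    refine ⟨((β j / t : ℕ) : ℤ), ?_⟩
    have h5 := Nat.mod_add_div (β j) t
    omega
  set G : Finset (Fin (t * n)) :=
    Finset.univ.filter (fun j : Fin (t * n) => β j % t = i ∨ β j % t = t - i) with hG
  have hentry : ∀ r j : Fin (t * n),
      (ω ^ (p r) * x (k r)) ^ ((β j : ℤ)) + (ω ^ (p r) * x (k r)) ^ (-(β j : ℤ))
      = ω ^ ((p r : ℤ) * ((β j % t : ℕ) : ℤ)) * x (k r) ^ ((β j : ℤ))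
        + ω ^ (-((p r : ℤ) * ((β j % t : ℕ) : ℤ))) * x (k r) ^ (-(β j : ℤ)) := by
    intro r j
    rw [mul_zpow, mul_zpow, ← zpow_natCast ω (p r), ← zpow_mul, ← zpow_mul]
    have e1 : ω ^ ((p r : ℤ) * ((β j : ℕ) : ℤ)) = ω ^ ((p r : ℤ) * ((β j % t : ℕ) : ℤ)) :=
      key _ _ (by rw [← mul_sub]; exact (hdvd j).mul_left _)
    have e2 : ω ^ ((p r : ℤ) * (-((β j : ℕ) : ℤ))) = ω ^ (-((p r : ℤ) * ((β j % t : ℕ) : ℤ))) := by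
      refine key _ _ ?_
      rw [show (p r : ℤ) * (-((β j : ℕ) : ℤ)) - (-((p r : ℤ) * ((β j % t : ℕ) : ℤ)))
          = -((p r : ℤ) * (((β j : ℕ) : ℤ) - ((β j % t : ℕ) : ℤ))) from by ring]
      exact ((hdvd j).mul_left _).neg_right
    rw [e1, e2]
  by_cases hsp : i = 0 ∨ 2 * i = t
  · -- self-paired case: span dimension n
    refine det_zero_of_cols _ (Fin n)
      (fun r k' => ω ^ ((p r : ℤ) * (i : ℤ)) * (if k' = k r then 1 else 0)) G ?_ ?_
    · rw [Fintype.card_fin]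
      rw [if_pos hsp] at hcard
      exact hcard
    · intro j hj
      have hcmem : β j % t = i ∨ β j % t = t - i := by
        simpa [hG] using hj
      refine ⟨fun k' => x k' ^ ((β j : ℤ)) + x k' ^ (-(β j : ℤ)), fun r => ?_⟩
      show (ω ^ (p r) * x (k r)) ^ ((β j : ℤ)) + (ω ^ (p r) * x (k r)) ^ (-(β j : ℤ)) = _
      rw [hentry r j, delta_sum]
      have hd1 : (t : ℤ) ∣ (((β j % t : ℕ) : ℤ) - (i : ℤ)) := by
        rcases hcmem with h | h
        · exact ⟨0, by omega⟩
        · rcases hsp with h' | h'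
          · exact ⟨1, by omega⟩
          · exact ⟨0, by omega⟩
      have hd2 : (t : ℤ) ∣ (((β j % t : ℕ) : ℤ) + (i : ℤ)) := by
        rcases hcmem with h | h
        · rcases hsp with h' | h'
          · exact ⟨0, by omega⟩
          · exact ⟨1, by omega⟩
        · exact ⟨1, by have := Nat.mod_lt (β j) ht0; omega⟩
      have w1 : ω ^ ((p r : ℤ) * ((β j % t : ℕ) : ℤ)) = ω ^ ((p r : ℤ) * (i : ℤ)) :=
        key _ _ (by rw [← mul_sub]; exact hd1.mul_left _)
      have w2 : ω ^ (-((p r : ℤ) * ((β j % t : ℕ) : ℤ))) = ω ^ ((p r : ℤ) * (i : ℤ)) := by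
        refine key _ _ ?_
        rw [show -((p r : ℤ) * ((β j % t : ℕ) : ℤ)) - (p r : ℤ) * (i : ℤ)
            = -((p r : ℤ) * (((β j % t : ℕ) : ℤ) + (i : ℤ))) from by ring]
        exact (hd2.mul_left _).neg_right
      rw [w1, w2]
      ring
  · -- paired case: span dimension 2n
    refine det_zero_of_cols _ (Fin 2 × Fin n)
      (fun r s => (if s.1 = 0 then ω ^ ((p r : ℤ) * (i : ℤ)) else ω ^ (-((p r : ℤ) * (i : ℤ))))
        * (if s.2 = k r then 1 else 0)) G ?_ ?_
    · rw [Fintype.card_prod, Fintype.card_fin, Fintype.card_fin]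
      rw [if_neg hsp] at hcard
      exact hcard
    · intro j hj
      have hcmem : β j % t = i ∨ β j % t = t - i := by
        simpa [hG] using hj
      rcases hcmem with h | h
      · refine ⟨fun s => if s.1 = 0 then x s.2 ^ ((β j : ℤ)) else x s.2 ^ (-(β j : ℤ)),
          fun r => ?_⟩
        show (ω ^ (p r) * x (k r)) ^ ((β j : ℤ)) + (ω ^ (p r) * x (k r)) ^ (-(β j : ℤ)) = _
        rw [hentry r j, h]
        simp only [Fintype.sum_prod_type, Fin.sum_univ_two]
        simp [mul_ite, ite_mul, Finset.sum_ite_eq', Finset.mem_univ]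
      · refine ⟨fun s => if s.1 = 0 then x s.2 ^ (-(β j : ℤ)) else x s.2 ^ ((β j : ℤ)),
          fun r => ?_⟩
        show (ω ^ (p r) * x (k r)) ^ ((β j : ℤ)) + (ω ^ (p r) * x (k r)) ^ (-(β j : ℤ)) = _
        rw [hentry r j]
        have hci : ((β j % t : ℕ) : ℤ) = (t : ℤ) - (i : ℤ) := by
          have : i ≤ t := by omega
          omega
        have w1 : ω ^ ((p r : ℤ) * ((β j % t : ℕ) : ℤ)) = ω ^ (-((p r : ℤ) * (i : ℤ))) := by
          refine key _ _ ?_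
          rw [hci, show (p r : ℤ) * ((t : ℤ) - (i : ℤ)) - (-((p r : ℤ) * (i : ℤ)))
              = (t : ℤ) * (p r : ℤ) from by ring]
          exact ⟨(p r : ℤ), rfl⟩
        have w2 : ω ^ (-((p r : ℤ) * ((β j % t : ℕ) : ℤ))) = ω ^ ((p r : ℤ) * (i : ℤ)) := by
          refine key _ _ ?_
          rw [hci, show -((p r : ℤ) * ((t : ℤ) - (i : ℤ))) - (p r : ℤ) * (i : ℤ)
              = (t : ℤ) * (-(p r : ℤ)) from by ring]
          exact ⟨-(p r : ℤ), rfl⟩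
        rw [w1, w2]
        simp only [Fintype.sum_prod_type, Fin.sum_univ_two]
        simp [mul_ite, ite_mul, Finset.sum_ite_eq', Finset.mem_univ]
        ring

def cntF (t m : ℕ) (β : Fin m → ℕ) (i : ℕ) : ℕ :=
  (Finset.univ.filter fun j : Fin m => β j % t = i ∨ β j % t = t - i).card

def bndF (t n i : ℕ) : ℕ := if i = 0 ∨ 2 * i = t then n else 2 * n

lemma exists_overfull {t n : ℕ} (ht : 2 ≤ t) (β : Fin (t * n) → ℕ)
    (hcore : ¬ (((Finset.univ.filter fun j : Fin (t * n) => β j % t = 0).card = n) ∧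
        ∀ i, 1 ≤ i → i ≤ t / 2 →
          (Finset.univ.filter fun j : Fin (t * n) => β j % t = i).card
            + (Finset.univ.filter fun j : Fin (t * n) => β j % t = t - i).card = 2 * n)) :
    ∃ i, i ≤ t / 2 ∧ bndF t n i < cntF t (t * n) β i := by
  have ht0 : 0 < t := by omega
  have hclt : ∀ j : Fin (t * n), β j % t < t := fun j => Nat.mod_lt _ ht0
  by_contra hcon
  push_neg at hcon
  have hsum1 : ∑ i ∈ Finset.range (t / 2 + 1), cntF t (t * n) β i = t * n := by
    have h1 := Finset.card_eq_sum_card_fiberwise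
      (f := fun j : Fin (t * n) => min (β j % t) (t - β j % t))
      (s := Finset.univ) (t := Finset.range (t / 2 + 1))
      (fun j _ => by have := hclt j; simp only [Finset.mem_coe, Finset.mem_range]; omega)
    rw [Finset.card_univ, Fintype.card_fin] at h1
    have h2 : ∑ i ∈ Finset.range (t / 2 + 1), cntF t (t * n) β i
        = ∑ i ∈ Finset.range (t / 2 + 1),
            (Finset.univ.filter fun j : Fin (t * n) => min (β j % t) (t - β j % t) = i).card := by
      refine Finset.sum_congr rfl fun i hi => ?_
      simp only [Finset.mem_range] at hi
      unfold cntF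
      congr 1
      refine Finset.filter_congr fun j _ => ?_
      have := hclt j
      omega
    exact h2.trans h1.symm
  have hsum2 : ∑ i ∈ Finset.range (t / 2 + 1), bndF t n i = t * n := by
    have h1 := Finset.card_eq_sum_card_fiberwise
      (f := fun cc : ℕ => min cc (t - cc))
      (s := Finset.range t) (t := Finset.range (t / 2 + 1))
      (fun cc hc => by simp only [Finset.mem_coe, Finset.mem_range] at *; omega)
    rw [Finset.card_range] at h1
    have h2 : ∀ i ∈ Finset.range (t / 2 + 1),
        bndF t n i = n * ((Finset.range t).filter fun cc => min cc (t - cc) = i).card := by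
      intro i hi
      simp only [Finset.mem_range] at hi
      have hfilt : ((Finset.range t).filter fun cc => min cc (t - cc) = i)
          = if i = 0 ∨ 2 * i = t then {i} else {i, t - i} := by
        split
        case isTrue h =>
          ext cc
          simp only [Finset.mem_filter, Finset.mem_range, Finset.mem_singleton]
          omega
        case isFalse h =>
          ext cc
          simp only [Finset.mem_filter, Finset.mem_range, Finset.mem_insert,
            Finset.mem_singleton]
          omega
      rw [hfilt]
      unfold bndF
      split
      case isTrue h => simp
      case isFalse h =>
        rw [Finset.card_insert_of_notMem (by simp; omega), Finset.card_singleton]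
        omega
    calc ∑ i ∈ Finset.range (t / 2 + 1), bndF t n i
        = ∑ i ∈ Finset.range (t / 2 + 1),
            n * ((Finset.range t).filter fun cc => min cc (t - cc) = i).card :=
          Finset.sum_congr rfl h2
      _ = n * ∑ i ∈ Finset.range (t / 2 + 1),
            ((Finset.range t).filter fun cc => min cc (t - cc) = i).card :=
          (Finset.mul_sum _ _ _).symm
      _ = n * t := by rw [← h1]
      _ = t * n := Nat.mul_comm n t
  have hall : ∀ i ∈ Finset.range (t / 2 + 1), cntF t (t * n) β i = bndF t n i := by
    by_contra hne
    push_neg at hne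
    obtain ⟨i0, hi0, hnei⟩ := hne
    have hlt : ∑ i ∈ Finset.range (t / 2 + 1), cntF t (t * n) β i
        < ∑ i ∈ Finset.range (t / 2 + 1), bndF t n i := by
      refine Finset.sum_lt_sum (fun i hi => ?_) ⟨i0, hi0, ?_⟩
      · simp only [Finset.mem_range] at hi
        exact hcon i (by omega)
      · simp only [Finset.mem_range] at hi0
        exact lt_of_le_of_ne (hcon i0 (by omega)) hnei
    rw [hsum1, hsum2] at hlt
    exact lt_irrefl _ hlt
  refine hcore ⟨?_, ?_⟩
  · have h0 := hall 0 (by simp)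
    have e2 : cntF t (t * n) β 0 = (Finset.univ.filter fun j : Fin (t * n) => β j % t = 0).card := by
      unfold cntF
      congr 1
      refine Finset.filter_congr fun j _ => ?_
      have := hclt j
      constructor
      · rintro (h | h)
        · exact h
        · omega
      · exact Or.inl
    have e3 : bndF t n 0 = n := by unfold bndF; simp
    omega
  · intro i h1i h2i
    have h0 := hall i (by simp only [Finset.mem_range]; omega)
    by_cases hsp : 2 * i = t
    · have e2 : cntF t (t * n) β i = (Finset.univ.filter fun j : Fin (t * n) => β j % t = i).card := by
        unfold cntF
        congr 1
        refine Finset.filter_congr fun j _ => ?_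
        constructor
        · rintro (h | h)
          · exact h
          · omega
        · exact Or.inl
      have e3 : bndF t n i = n := by unfold bndF; rw [if_pos (Or.inr hsp)]
      have e4 : t - i = i := by omega
      rw [e4]
      omega
    · have e2 : cntF t (t * n) β i
          = (Finset.univ.filter fun j : Fin (t * n) => β j % t = i).card
            + (Finset.univ.filter fun j : Fin (t * n) => β j % t = t - i).card := by
        unfold cntF
        rw [Finset.filter_or, Finset.card_union_of_disjoint]
        rw [Finset.disjoint_left]
        intro j hj1 hj2
        simp only [Finset.mem_filter] at hj1 hj2
        omega
      have e3 : bndF t n i = 2 * n := by unfold bndF; rw [if_neg (by omega)]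
      omega

end Aux

/-- If the `t`-core of `λ` is not an orthogonal `t`-core, i.e. it is not the case that
`n_0(λ,tn) = n` and `n_i + n_{t-i} = 2n` for all `1 ≤ i ≤ ⌊t/2⌋`, then the `tn × tn`
matrix with entries `(ω^p x_i)^{β_j(λ)} + (ω^p x_i)^{-β_j(λ)}` has determinant `0`;
in particular `oe_λ(X, ωX, …, ω^{t-1}X) = 0`. -/
theorem even_orthogonal_twisted_vanishing
    (t n : ℕ) (ht : 2 ≤ t) (hn : 1 ≤ n)
    (ω : ℂ) (hω : IsPrimitiveRoot ω t)
    (lam : Fin (t * n) → ℕ)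
    (hanti : ∀ j k : Fin (t * n), j ≤ k → lam k ≤ lam j)
    (hcore : ¬ (ncount t (t * n) lam 0 = n ∧
        ∀ i, 1 ≤ i → i ≤ t / 2 →
          ncount t (t * n) lam i + ncount t (t * n) lam (t - i) = 2 * n))
    (x : Fin n → ℂ) (hx0 : ∀ i, x i ≠ 0) :
    Matrix.det (Matrix.of fun r j : Fin (t * n) =>
        (ω ^ (((finProdFinEquiv.symm r).1 : ℕ)) * x (finProdFinEquiv.symm r).2)
            ^ ((betaSet (t * n) lam j : ℤ))
          + (ω ^ (((finProdFinEquiv.symm r).1 : ℕ)) * x (finProdFinEquiv.symm r).2)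
            ^ (-(betaSet (t * n) lam j : ℤ))) = 0
    ∧ oeChar (t * n) lam
        (fun r => ω ^ (((finProdFinEquiv.symm r).1 : ℕ)) * x (finProdFinEquiv.symm r).2)
      = 0 := by
  have hcore' : ¬ (((Finset.univ.filter fun j : Fin (t * n) =>
          (fun j => betaSet (t * n) lam j) j % t = 0).card = n) ∧
        ∀ i, 1 ≤ i → i ≤ t / 2 →
          (Finset.univ.filter fun j : Fin (t * n) =>
              (fun j => betaSet (t * n) lam j) j % t = i).card
            + (Finset.univ.filter fun j : Fin (t * n) =>
                (fun j => betaSet (t * n) lam j) j % t = t - i).card = 2 * n) := by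
    simpa [ncount] using hcore
  obtain ⟨i, hile, hcard⟩ := exists_overfull (n := n) ht (fun j => betaSet (t * n) lam j) hcore'
  have h1 : Matrix.det (Matrix.of fun r j : Fin (t * n) =>
        (ω ^ (((finProdFinEquiv.symm r).1 : ℕ)) * x (finProdFinEquiv.symm r).2)
            ^ ((betaSet (t * n) lam j : ℤ))
          + (ω ^ (((finProdFinEquiv.symm r).1 : ℕ)) * x (finProdFinEquiv.symm r).2)
            ^ (-(betaSet (t * n) lam j : ℤ))) = 0 := by
    exact main_det ht hω (fun j => betaSet (t * n) lam j) x
      (fun r => ((finProdFinEquiv.symm r).1 : ℕ)) (fun r => (finProdFinEquiv.symm r).2)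
      i hile (by unfold bndF cntF at hcard; exact hcard)
  refine ⟨h1, ?_⟩
  simp only [oeChar]
  rw [h1, zero_div]
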